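/- Let f : [0,∞) × [0,1] → ℝ be continuous with continuous partial derivative ∂f/∂t. Suppose u : [0,∞) × [0,1] → ℝ is continuous, has a continuous partial derivative ∂u/∂t, satisfies ∂u/∂t(t,x) − 3 ∫₀¹ x s ∂u/∂t(t,s) ds = u(t,x) + f(t,x) for all t ≥ 0, x ∈ [0,1], and satisfies u(0,x) − 3 ∫₀¹ x s u(0,s) ds = 0 for all x ∈ [0,1]. Then u is uniquely determined: u(t,x) = ∫₀ᵗ e^{t−z} ( f(z,x) − 3x ∫₀¹ s f(z,s) ds ) dz − 3x ∫₀¹ s f(t,s) ds for all t ≥ 0, x ∈ [0,1]. -/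

import Mathlib

/-- The explicit solution of Example 2:
`u(t,x) = ∫₀ᵗ e^{t−z} ( f(z,x) − 3x ∫₀¹ s f(z,s) ds ) dz − 3x ∫₀¹ s f(t,s) ds`. -/
noncomputable def uSol (f : ℝ → ℝ → ℝ) (t x : ℝ) : ℝ :=
  (∫ z in (0:ℝ)..t,
      Real.exp (t - z) * (f z x - 3 * x * ∫ s in (0:ℝ)..1, s * f z s))
    - 3 * x * ∫ s in (0:ℝ)..1, s * f t s

open Set MeasureTheory intervalIntegral Filter

lemma sliceCont {F : ℝ → ℝ → ℝ}
    (hF : ContinuousOn (fun p : ℝ × ℝ => F p.1 p.2) (Set.Ici 0 ×ˢ Set.Icc 0 1))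
    {t : ℝ} (ht : 0 ≤ t) :
    ContinuousOn (fun s => s * F t s) (Set.Icc 0 1) := by
  apply continuousOn_id.mul
  exact hF.comp ((continuous_const.prodMk continuous_id).continuousOn)
    (fun s hs => ⟨ht, hs⟩)

lemma sliceContT {F : ℝ → ℝ → ℝ}
    (hF : ContinuousOn (fun p : ℝ × ℝ => F p.1 p.2) (Set.Ici 0 ×ˢ Set.Icc 0 1))
    {x : ℝ} (hx : x ∈ Set.Icc (0:ℝ) 1) :
    ContinuousOn (fun t => F t x) (Set.Ici 0) :=
  hF.comp ((continuous_id.prodMk continuous_const).continuousOn)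
    (fun t ht => ⟨ht, hx⟩)

lemma sliceInt {F : ℝ → ℝ → ℝ}
    (hF : ContinuousOn (fun p : ℝ × ℝ => F p.1 p.2) (Set.Ici 0 ×ˢ Set.Icc 0 1))
    {t : ℝ} (ht : 0 ≤ t) :
    IntervalIntegrable (fun s => s * F t s) volume 0 1 := by
  apply ContinuousOn.intervalIntegrable
  rw [Set.uIcc_of_le zero_le_one]
  exact sliceCont hF ht

lemma sliceMeas {F : ℝ → ℝ → ℝ}
    (hF : ContinuousOn (fun p : ℝ × ℝ => F p.1 p.2) (Set.Ici 0 ×ˢ Set.Icc 0 1))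
    {t : ℝ} (ht : 0 ≤ t) :
    AEStronglyMeasurable (fun s => s * F t s) (volume.restrict (Set.uIoc (0:ℝ) 1)) := by
  have h1 : Set.uIoc (0:ℝ) 1 = Set.Ioc 0 1 := Set.uIoc_of_le zero_le_one
  exact ContinuousOn.aestronglyMeasurable
    ((sliceCont hF ht).mono (by rw [h1]; exact Set.Ioc_subset_Icc_self))
    (by rw [h1]; exact measurableSet_Ioc)

lemma contOn_B {F : ℝ → ℝ → ℝ}
    (hF : ContinuousOn (fun p : ℝ × ℝ => F p.1 p.2) (Set.Ici 0 ×ˢ Set.Icc 0 1)) :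
    ContinuousOn (fun t => ∫ s in (0:ℝ)..1, s * F t s) (Set.Ici 0) := by
  intro t₀ ht₀
  -- bound on compact set
  obtain ⟨C, hC⟩ : ∃ C, ∀ p ∈ (Set.Icc (0:ℝ) (t₀+1) ×ˢ Set.Icc (0:ℝ) 1),
      ‖(fun p : ℝ × ℝ => F p.1 p.2) p‖ ≤ C := by
    apply (isCompact_Icc.prod isCompact_Icc).exists_bound_of_continuousOn
    exact hF.mono (Set.prod_mono (fun a ha => ha.1) subset_rfl)
  apply intervalIntegral.continuousWithinAt_of_dominated_interval
    (bound := fun _ => C)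
  · filter_upwards [self_mem_nhdsWithin] with x hx
    exact sliceMeas hF hx
  · have hev : ∀ᶠ x in nhdsWithin t₀ (Set.Ici 0), x ∈ Set.Icc 0 (t₀+1) := by
      filter_upwards [self_mem_nhdsWithin,
        nhdsWithin_le_nhds (Iio_mem_nhds (by linarith : t₀ < t₀+1))] with x h1 h2
      exact ⟨h1, le_of_lt h2⟩
    filter_upwards [hev] with x hx
    filter_upwards [] with s hs
    have hs' : s ∈ Set.Icc (0:ℝ) 1 := by
      rw [Set.uIoc_of_le zero_le_one] at hs; exact Set.Ioc_subset_Icc_self hs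
    have := hC (x, s) ⟨hx, hs'⟩
    have hsle : |s| ≤ 1 := abs_le.2 ⟨by linarith [hs'.1], hs'.2⟩
    calc ‖s * F x s‖ = |s| * ‖F x s‖ := by rw [norm_mul]; rfl
    _ ≤ 1 * C := mul_le_mul hsle this (norm_nonneg _) zero_le_one
    _ = C := one_mul C
  · exact intervalIntegrable_const
  · filter_upwards [] with s hs
    have hs' : s ∈ Set.Icc (0:ℝ) 1 := by
      rw [Set.uIoc_of_le zero_le_one] at hs; exact Set.Ioc_subset_Icc_self hs
    exact (continuousWithinAt_const.mul ((sliceContT hF hs') t₀ ht₀))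

lemma hasDerivAt_B {F F' : ℝ → ℝ → ℝ}
    (hF : ContinuousOn (fun p : ℝ × ℝ => F p.1 p.2) (Set.Ici 0 ×ˢ Set.Icc 0 1))
    (hF'c : ContinuousOn (fun p : ℝ × ℝ => F' p.1 p.2) (Set.Ici 0 ×ˢ Set.Icc 0 1))
    (hd : ∀ x ∈ Set.Icc (0:ℝ) 1, ∀ t ∈ Set.Ici (0:ℝ),
      HasDerivWithinAt (fun τ => F τ x) (F' t x) (Set.Ici 0) t)
    {t₀ : ℝ} (ht₀ : 0 < t₀) :
    HasDerivAt (fun τ => ∫ s in (0:ℝ)..1, s * F τ s)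
      (∫ s in (0:ℝ)..1, s * F' t₀ s) t₀ := by
  obtain ⟨C, hC⟩ : ∃ C, ∀ p ∈ (Set.Icc (t₀/2) (t₀+t₀/2) ×ˢ Set.Icc (0:ℝ) 1),
      ‖(fun p : ℝ × ℝ => F' p.1 p.2) p‖ ≤ C := by
    apply (isCompact_Icc.prod isCompact_Icc).exists_bound_of_continuousOn
    exact hF'c.mono (Set.prod_mono (fun a ha => le_trans (by positivity) ha.1) subset_rfl)
  have hball : Metric.ball t₀ (t₀/2) ⊆ Set.Icc (t₀/2) (t₀+t₀/2) := by
    intro y hy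
    rw [Metric.mem_ball, Real.dist_eq, abs_lt] at hy
    constructor <;> linarith [hy.1, hy.2]
  have key := intervalIntegral.hasDerivAt_integral_of_dominated_loc_of_deriv_le
    (F := fun τ s => s * F τ s) (F' := fun τ s => s * F' τ s) (x₀ := t₀)
    (a := (0:ℝ)) (b := 1) (bound := fun _ => C) (Metric.ball_mem_nhds t₀ (half_pos ht₀))
    ?_ (sliceInt hF ht₀.le) (sliceMeas hF'c ht₀.le) ?_ intervalIntegrable_const ?_
  · exact key.2
  · filter_upwards [Ioi_mem_nhds ht₀] with x hx
    exact sliceMeas hF (le_of_lt hx)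
  · filter_upwards [] with s hs
    intro y hy
    have hs' : s ∈ Set.Icc (0:ℝ) 1 := by
      rw [Set.uIoc_of_le zero_le_one] at hs; exact Set.Ioc_subset_Icc_self hs
    have := hC (y, s) ⟨hball hy, hs'⟩
    have hsle : |s| ≤ 1 := abs_le.2 ⟨by linarith [hs'.1], hs'.2⟩
    calc ‖s * F' y s‖ = |s| * ‖F' y s‖ := by rw [norm_mul]; rfl
    _ ≤ 1 * C := mul_le_mul hsle this (norm_nonneg _) zero_le_one
    _ = C := one_mul C
  · filter_upwards [] with s hs
    intro y hy
    have hs' : s ∈ Set.Icc (0:ℝ) 1 := by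
      rw [Set.uIoc_of_le zero_le_one] at hs; exact Set.Ioc_subset_Icc_self hs
    have hy0 : 0 < y := by
      have := hball hy; linarith [this.1]
    exact ((hd s hs' y hy0.le).hasDerivAt (Ici_mem_nhds hy0)).const_mul s

/-- Uniqueness in Example 2: if `f` is continuous on `[0,∞) × [0,1]` with continuous
partial derivative `∂f/∂t`, and `u` is continuous, has a continuous partial derivative
`∂u/∂t`, satisfies `∂u/∂t(t,x) − 3 ∫₀¹ x s ∂u/∂t(t,s) ds = u(t,x) + f(t,x)` on
`[0,∞) × [0,1]`, and `u(0,x) − 3 ∫₀¹ x s u(0,s) ds = 0` on `[0,1]`, then `u` is given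
by the explicit formula `uSol f`. -/
theorem stmt_6 (f ft u ut : ℝ → ℝ → ℝ)
    (hf : ContinuousOn (fun p : ℝ × ℝ => f p.1 p.2) (Set.Ici 0 ×ˢ Set.Icc 0 1))
    (hft : ∀ x ∈ Set.Icc (0:ℝ) 1, ∀ t ∈ Set.Ici (0:ℝ),
      HasDerivWithinAt (fun τ => f τ x) (ft t x) (Set.Ici 0) t)
    (hftc : ContinuousOn (fun p : ℝ × ℝ => ft p.1 p.2) (Set.Ici 0 ×ˢ Set.Icc 0 1))
    (hu : ContinuousOn (fun p : ℝ × ℝ => u p.1 p.2) (Set.Ici 0 ×ˢ Set.Icc 0 1))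
    (hut : ∀ x ∈ Set.Icc (0:ℝ) 1, ∀ t ∈ Set.Ici (0:ℝ),
      HasDerivWithinAt (fun τ => u τ x) (ut t x) (Set.Ici 0) t)
    (hutc : ContinuousOn (fun p : ℝ × ℝ => ut p.1 p.2) (Set.Ici 0 ×ˢ Set.Icc 0 1))
    (heq : ∀ t ∈ Set.Ici (0:ℝ), ∀ x ∈ Set.Icc (0:ℝ) 1,
      ut t x - 3 * x * ∫ s in (0:ℝ)..1, s * ut t s = u t x + f t x)
    (hinit : ∀ x ∈ Set.Icc (0:ℝ) 1,
      u 0 x - 3 * x * ∫ s in (0:ℝ)..1, s * u 0 s = 0) :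
    ∀ t ∈ Set.Ici (0:ℝ), ∀ x ∈ Set.Icc (0:ℝ) 1, u t x = uSol f t x := by
  -- balance identity: A τ + B τ = 0
  have hAB : ∀ τ ∈ Set.Ici (0:ℝ),
      (∫ s in (0:ℝ)..1, s * u τ s) + (∫ s in (0:ℝ)..1, s * f τ s) = 0 := by
    intro τ hτ
    set γ : ℝ := ∫ s in (0:ℝ)..1, s * ut τ s with hγ
    have hcongr : (∫ x in (0:ℝ)..1, x * (ut τ x - 3 * x * γ))
        = ∫ x in (0:ℝ)..1, x * (u τ x + f τ x) := by
      apply intervalIntegral.integral_congr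
      intro x hx
      rw [Set.uIcc_of_le zero_le_one] at hx
      simp only
      rw [heq τ hτ x hx]
    have hL : (∫ x in (0:ℝ)..1, x * (ut τ x - 3 * x * γ)) = 0 := by
      have h1 : (fun x => x * (ut τ x - 3 * x * γ))
          = fun x => x * ut τ x - (3*γ) * x^2 := by funext x; ring
      rw [h1, intervalIntegral.integral_sub (sliceInt hutc hτ)
        (by apply Continuous.intervalIntegrable; continuity),
        intervalIntegral.integral_const_mul, integral_pow]
      simp [← hγ]
      ring
    have hR : (∫ x in (0:ℝ)..1, x * (u τ x + f τ x))
        = (∫ s in (0:ℝ)..1, s * u τ s) + (∫ s in (0:ℝ)..1, s * f τ s) := by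
      have h1 : (fun x => x * (u τ x + f τ x))
          = fun x => x * u τ x + x * f τ x := by funext x; ring
      rw [h1]
      exact intervalIntegral.integral_add (sliceInt hu hτ) (sliceInt hf hτ)
    rw [hL, hR] at hcongr
    linarith
  intro t ht x hx
  rcases eq_or_lt_of_le (Set.mem_Ici.mp ht : (0:ℝ) ≤ t) with h0 | hpos
  · -- t = 0
    subst h0
    have h1 := hinit x hx
    have h2 := hAB 0 Set.self_mem_Ici
    unfold uSol
    rw [intervalIntegral.integral_same]
    linear_combination h1 + 3*x*h2
  · -- t > 0
    set B : ℝ → ℝ := fun τ => ∫ s in (0:ℝ)..1, s * f τ s with hBdef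
    set Φ : ℝ → ℝ := fun τ => Real.exp (-τ) * (u τ x + 3 * x * B τ) with hΦdef
    have hBcont : ContinuousOn B (Set.Ici 0) := contOn_B hf
    -- FTC setup
    have hftc' : ∫ z in (0:ℝ)..t, Real.exp (-z) * (f z x - 3 * x * B z) = Φ t - Φ 0 := by
      apply intervalIntegral.integral_eq_sub_of_hasDeriv_right_of_le hpos.le
      · -- continuity of Φ on [0,t]
        apply ContinuousOn.mul
        · exact (Real.continuous_exp.comp continuous_neg).continuousOn
        · apply ContinuousOn.add
          · exact ((sliceContT hu hx).mono (Set.Icc_subset_Ici_self))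
          · exact (continuousOn_const.mul (hBcont.mono Set.Icc_subset_Ici_self))
      · -- derivative of Φ on (0,t)
        intro z hz
        have hz0 : (0:ℝ) < z := hz.1
        have h1 : HasDerivAt (fun τ => u τ x) (ut z x) z :=
          (hut x hx z hz0.le).hasDerivAt (Ici_mem_nhds hz0)
        have hB' : HasDerivAt B (∫ s in (0:ℝ)..1, s * ft z s) z :=
          hasDerivAt_B hf hftc hft hz0
        have hA' : HasDerivAt (fun τ => ∫ s in (0:ℝ)..1, s * u τ s)
            (∫ s in (0:ℝ)..1, s * ut z s) z :=
          hasDerivAt_B hu hutc hut hz0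
        have hA'' : HasDerivAt (fun τ => ∫ s in (0:ℝ)..1, s * u τ s)
            (-(∫ s in (0:ℝ)..1, s * ft z s)) z := by
          have hEq : (fun τ => ∫ s in (0:ℝ)..1, s * u τ s) =ᶠ[nhds z] (fun τ => -B τ) := by
            filter_upwards [Ici_mem_nhds hz0] with τ hτ
            have := hAB τ hτ
            simp only [hBdef]
            linarith
          exact (hB'.neg).congr_of_eventuallyEq hEq
        have hγ : (∫ s in (0:ℝ)..1, s * ut z s) = -(∫ s in (0:ℝ)..1, s * ft z s) :=
          hA'.unique hA''
        have hode : ut z x = u z x + f z x + 3 * x * (∫ s in (0:ℝ)..1, s * ut z s) := by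
          have := heq z hz0.le x hx
          linarith
        have hexp : HasDerivAt (fun τ : ℝ => Real.exp (-τ)) (-Real.exp (-z)) z := by
          have := (Real.hasDerivAt_exp (-z)).comp z (hasDerivAt_neg z)
          exact this.congr_deriv (by ring)
        have hinner : HasDerivAt (fun τ => u τ x + 3 * x * B τ)
            (ut z x + 3 * x * (∫ s in (0:ℝ)..1, s * ft z s)) z :=
          h1.add ((hB'.const_mul (3*x)).congr_deriv (by ring))
        have hmul := hexp.mul hinner
        have : HasDerivAt Φ (Real.exp (-z) * (f z x - 3 * x * B z)) z := by
          refine hmul.congr_deriv ?_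
          rw [hode, hγ]
          ring
        exact this.hasDerivWithinAt
      · -- integrability of the integrand
        apply ContinuousOn.intervalIntegrable
        rw [Set.uIcc_of_le hpos.le]
        apply ContinuousOn.mul
        · exact (Real.continuous_exp.comp continuous_neg).continuousOn
        · apply ContinuousOn.sub
          · exact (sliceContT hf hx).mono Set.Icc_subset_Ici_self
          · exact continuousOn_const.mul (hBcont.mono Set.Icc_subset_Ici_self)
    have hΦ0 : Φ 0 = 0 := by
      have h1 := hinit x hx
      have h2 := hAB 0 Set.self_mem_Ici
      simp only [hΦdef, hBdef, neg_zero, Real.exp_zero, one_mul]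
      linear_combination h1 + 3*x*h2
    rw [hΦ0, sub_zero] at hftc'
    -- now Φ t = ∫ ...
    have hmain : u t x = Real.exp t * (∫ z in (0:ℝ)..t,
        Real.exp (-z) * (f z x - 3 * x * B z)) - 3 * x * B t := by
      rw [hftc']
      simp only [hΦdef]
      rw [← mul_assoc, ← Real.exp_add]
      simp
    rw [hmain]
    unfold uSol
    have hintrw : (∫ z in (0:ℝ)..t,
          Real.exp (t - z) * (f z x - 3 * x * ∫ s in (0:ℝ)..1, s * f z s))
        = Real.exp t * ∫ z in (0:ℝ)..t, Real.exp (-z) * (f z x - 3 * x * B z) := by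
      rw [← intervalIntegral.integral_const_mul]
      apply intervalIntegral.integral_congr
      intro z hz
      simp only [hBdef]
      rw [sub_eq_add_neg, Real.exp_add]
      ring
    rw [hintrw]
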